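/- If x is a positive fixed point of T, then the error of the Sinkhorn–Knopp iteration satisfies a local linear contraction: the derivative of T at x, namely J_T(x), has spectral radius 1 with the eigenvalue 1 simple, and the second largest eigenvalue of J_T(x) equals σ₂², the square of the second largest singular value of the doubly stochastic matrix P = diag(1./(Ax))·A·diag(x). -/

import Mathlib

open Matrix Polynomial

lemma aux_charpoly_conj {m : Type*} [Fintype m] [DecidableEq m] {R : Type*} [CommRing R]
    (M N N' : Matrix m m R) (h : N * N' = 1) (h' : N' * N = 1) :
    (N * M * N').charpoly = M.charpoly := by
  have key : charmatrix (N * M * N') = N.map C * charmatrix M * N'.map C := by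
    rw [charmatrix, charmatrix]
    rw [mul_sub, sub_mul]
    congr 1
    · rw [← (Matrix.scalar_commute (X : R[X]) (fun r' => Commute.all _ _) (N.map C)).eq,
        Matrix.mul_assoc, ← Matrix.map_mul, h, Matrix.map_one _ (map_zero C) (map_one C),
        Matrix.mul_one]
    · simp only [RingHom.mapMatrix_apply]
      rw [Matrix.map_mul, Matrix.map_mul]
  unfold Matrix.charpoly
  rw [key, det_mul, det_mul, mul_comm, ← mul_assoc, ← det_mul, ← Matrix.map_mul, h',
    Matrix.map_one _ (map_zero C) (map_one C), det_one, one_mul]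


lemma aux_const_of_fixed {n : ℕ} (hn : 0 < n) (S : Matrix (Fin n) (Fin n) ℝ)
    (hpos : ∀ i j, 0 < S i j) (hrow : ∀ i, ∑ j, S i j = 1)
    (v : Fin n → ℝ) (hv : S *ᵥ v = v) : ∀ i j, v i = v j := by
  haveI : NeZero n := ⟨hn.ne'⟩
  obtain ⟨i₀, -, hi₀⟩ := Finset.exists_max_image Finset.univ v ⟨0, Finset.mem_univ 0⟩
  have key : ∀ j, v j = v i₀ := by
    have hsum : ∑ j, S i₀ j * (v i₀ - v j) = 0 := by
      have h1 : (S *ᵥ v) i₀ = v i₀ := congrFun hv i₀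
      rw [mulVec, dotProduct] at h1
      have : ∑ j, S i₀ j * (v i₀ - v j) = (∑ j, S i₀ j) * v i₀ - ∑ j, S i₀ j * v j := by
        rw [Finset.sum_mul, ← Finset.sum_sub_distrib]
        congr 1; ext j; ring
      rw [this, hrow, one_mul, h1, sub_self]
    intro j
    have hterm : S i₀ j * (v i₀ - v j) = 0 := by
      have := (Finset.sum_eq_zero_iff_of_nonneg (fun k _ => by
        have h2 := hi₀ k (Finset.mem_univ k)
        exact mul_nonneg (hpos i₀ k).le (by linarith))).mp hsum j (Finset.mem_univ j)
      exact this
    have := mul_eq_zero.mp hterm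
    rcases this with h | h
    · exact absurd h (hpos i₀ j).ne'
    · linarith [sub_eq_zero.mp h]
  intro i j; rw [key i, key j]

lemma aux_one_mem_spectrum {n : ℕ} (hn : 0 < n) (S : Matrix (Fin n) (Fin n) ℝ)
    (hrow : ∀ i, ∑ j, S i j = 1) : (1 : ℝ) ∈ spectrum ℝ S := by
  haveI : NeZero n := ⟨hn.ne'⟩
  have hdet : det ((1 : Matrix (Fin n) (Fin n) ℝ) - S) = 0 := by
    rw [← Matrix.exists_mulVec_eq_zero_iff]
    refine ⟨fun _ => 1, ?_, ?_⟩
    · intro h; exact one_ne_zero (congrFun h 0)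
    · ext i
      simp only [Matrix.mulVec, dotProduct, Matrix.sub_apply, Matrix.one_apply, mul_one,
        Pi.zero_apply, sub_mul, ite_mul, one_mul, zero_mul]
      rw [Finset.sum_sub_distrib, hrow]
      simp
  rw [spectrum.mem_iff]
  intro hunit
  rw [show (algebraMap ℝ (Matrix (Fin n) (Fin n) ℝ)) 1 = 1 from map_one _] at hunit
  rw [Matrix.isUnit_iff_isUnit_det] at hunit
  rw [hdet] at hunit
  exact hunit.ne_zero rfl

lemma aux_mult_one {n : ℕ} (hn : 0 < n) (S : Matrix (Fin n) (Fin n) ℝ)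
    (hS : S.IsHermitian) (hpos : ∀ i j, 0 < S i j) (hrow : ∀ i, ∑ j, S i j = 1) :
    S.charpoly.rootMultiplicity 1 = 1 := by
  haveI : NeZero n := ⟨hn.ne'⟩
  have hU1 : (hS.eigenvectorUnitary : Matrix (Fin n) (Fin n) ℝ) * star (hS.eigenvectorUnitary : Matrix (Fin n) (Fin n) ℝ) = 1 :=
    (Matrix.mem_unitaryGroup_iff).mp hS.eigenvectorUnitary.2
  have hU1' : star (hS.eigenvectorUnitary : Matrix (Fin n) (Fin n) ℝ) * (hS.eigenvectorUnitary : Matrix (Fin n) (Fin n) ℝ) = 1 :=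
    (Matrix.mem_unitaryGroup_iff').mp hS.eigenvectorUnitary.2
  have hSpec : S = (hS.eigenvectorUnitary : Matrix (Fin n) (Fin n) ℝ) * diagonal hS.eigenvalues
      * star (hS.eigenvectorUnitary : Matrix (Fin n) (Fin n) ℝ) := by
    have := hS.spectral_theorem
    simpa using this
  have hchar : S.charpoly = ∏ i, (X - C (hS.eigenvalues i)) := by
    conv_lhs => rw [hSpec]
    rw [aux_charpoly_conj _ _ _ hU1 hU1']
    rw [Matrix.charpoly_of_upperTriangular _ (Matrix.blockTriangular_diagonal hS.eigenvalues)]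
    simp
  have hroots : (∏ i, (X - C (hS.eigenvalues i))).roots = (Finset.univ.val.map hS.eigenvalues) := by
    have hmm : Multiset.map (fun i => X - C (hS.eigenvalues i)) Finset.univ.val
        = Multiset.map (fun a => X - C a) (Multiset.map hS.eigenvalues Finset.univ.val) := by
      rw [Multiset.map_map]; rfl
    rw [Finset.prod_eq_multiset_prod, hmm]
    exact Polynomial.roots_multiset_prod_X_sub_C _
  have hcount : (∏ i, (X - C (hS.eigenvalues i))).rootMultiplicity 1 =
      (Finset.univ.filter fun i => hS.eigenvalues i = 1).card := by
    rw [← Polynomial.count_roots, hroots, Multiset.count_map]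
    rw [Finset.card, Finset.filter_val]
    congr 1
    apply Multiset.filter_congr
    intro a _
    exact ⟨Eq.symm, Eq.symm⟩
  have hex : ∃ i, hS.eigenvalues i = 1 := by
    have h1 : (1 : ℝ) ∈ spectrum ℝ S := aux_one_mem_spectrum hn S hrow
    let uU : (Matrix (Fin n) (Fin n) ℝ)ˣ :=
      ⟨(hS.eigenvectorUnitary : Matrix (Fin n) (Fin n) ℝ),
        star (hS.eigenvectorUnitary : Matrix (Fin n) (Fin n) ℝ), hU1, hU1'⟩
    have h2 : S = (uU : Matrix (Fin n) (Fin n) ℝ) * diagonal hS.eigenvalues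
        * ((uU⁻¹ : (Matrix (Fin n) (Fin n) ℝ)ˣ) : Matrix (Fin n) (Fin n) ℝ) := hSpec
    rw [h2, spectrum.units_conjugate, spectrum_diagonal] at h1
    exact h1
  have huniq : ∀ i j, hS.eigenvalues i = 1 → hS.eigenvalues j = 1 → i = j := by
    intro i j hi hj
    by_contra hij
    have hvi : S *ᵥ ⇑(hS.eigenvectorBasis i) = ⇑(hS.eigenvectorBasis i) := by
      rw [hS.mulVec_eigenvectorBasis, hi, one_smul]
    have hwi : S *ᵥ ⇑(hS.eigenvectorBasis j) = ⇑(hS.eigenvectorBasis j) := by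
      rw [hS.mulVec_eigenvectorBasis, hj, one_smul]
    have hvc : ∀ k l : Fin n, hS.eigenvectorBasis i k = hS.eigenvectorBasis i l :=
      fun k l => aux_const_of_fixed hn S hpos hrow _ hvi k l
    have hwc : ∀ k l : Fin n, hS.eigenvectorBasis j k = hS.eigenvectorBasis j l :=
      fun k l => aux_const_of_fixed hn S hpos hrow _ hwi k l
    have horth : (inner ℝ (hS.eigenvectorBasis i) (hS.eigenvectorBasis j) : ℝ) = 0 :=
      hS.eigenvectorBasis.orthonormal.2 hij
    have hinner : (inner ℝ (hS.eigenvectorBasis i) (hS.eigenvectorBasis j) : ℝ)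
        = ∑ k, (hS.eigenvectorBasis i) k * (hS.eigenvectorBasis j) k := by
      simp [PiLp.inner_apply, RCLike.inner_apply, mul_comm]
    have hsum : ∑ k : Fin n, (hS.eigenvectorBasis i) k * (hS.eigenvectorBasis j) k
        = (n : ℝ) * ((hS.eigenvectorBasis i) 0 * (hS.eigenvectorBasis j) 0) := by
      rw [Finset.sum_congr rfl (fun k _ => by rw [hvc k 0, hwc k 0])]
      simp [mul_comm]
    have h0 : (hS.eigenvectorBasis i) 0 * (hS.eigenvectorBasis j) 0 = 0 := by
      have hz : (n : ℝ) * ((hS.eigenvectorBasis i) 0 * (hS.eigenvectorBasis j) 0) = 0 := by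
        rw [← hsum, ← hinner, horth]
      rcases mul_eq_zero.mp hz with h | h
      · exact absurd h (Nat.cast_ne_zero.mpr hn.ne')
      · exact h
    have hni : (inner ℝ (hS.eigenvectorBasis i) (hS.eigenvectorBasis i) : ℝ) = 1 := by
      rw [real_inner_self_eq_norm_sq, hS.eigenvectorBasis.orthonormal.1 i, one_pow]
    have hnj : (inner ℝ (hS.eigenvectorBasis j) (hS.eigenvectorBasis j) : ℝ) = 1 := by
      rw [real_inner_self_eq_norm_sq, hS.eigenvectorBasis.orthonormal.1 j, one_pow]
    have hii : (inner ℝ (hS.eigenvectorBasis i) (hS.eigenvectorBasis i) : ℝ)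
        = (n : ℝ) * ((hS.eigenvectorBasis i) 0 * (hS.eigenvectorBasis i) 0) := by
      rw [show (inner ℝ (hS.eigenvectorBasis i) (hS.eigenvectorBasis i) : ℝ)
          = ∑ k, (hS.eigenvectorBasis i) k * (hS.eigenvectorBasis i) k by
        simp only [PiLp.inner_apply, RCLike.inner_apply, conj_trivial]]
      rw [Finset.sum_congr rfl (fun k _ => by rw [hvc k 0])]
      simp [mul_comm]
    have hjj : (inner ℝ (hS.eigenvectorBasis j) (hS.eigenvectorBasis j) : ℝ)
        = (n : ℝ) * ((hS.eigenvectorBasis j) 0 * (hS.eigenvectorBasis j) 0) := by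
      rw [show (inner ℝ (hS.eigenvectorBasis j) (hS.eigenvectorBasis j) : ℝ)
          = ∑ k, (hS.eigenvectorBasis j) k * (hS.eigenvectorBasis j) k by
        simp only [PiLp.inner_apply, RCLike.inner_apply, conj_trivial]]
      rw [Finset.sum_congr rfl (fun k _ => by rw [hwc k 0])]
      simp [mul_comm]
    rcases mul_eq_zero.mp h0 with h | h
    · rw [hii, h] at hni; simp at hni
    · rw [hjj, h] at hnj; simp at hnj
  rw [hchar, hcount]
  obtain ⟨i₀, hi₀⟩ := hex
  rw [Finset.card_eq_one]
  refine ⟨i₀, ?_⟩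
  ext j
  simp only [Finset.mem_filter, Finset.mem_univ, true_and, Finset.mem_singleton]
  exact ⟨fun hj => huniq j i₀ hj hi₀, fun hj => hj ▸ hi₀⟩


lemma aux_det_one_sub {n : ℕ} (hn : 0 < n) (S : Matrix (Fin n) (Fin n) ℝ)
    (hrow : ∀ i, ∑ j, S i j = 1) : det ((1 : Matrix (Fin n) (Fin n) ℝ) - S) = 0 := by
  haveI : NeZero n := ⟨hn.ne'⟩
  rw [← Matrix.exists_mulVec_eq_zero_iff]
  refine ⟨fun _ => 1, ?_, ?_⟩
  · intro h; exact one_ne_zero (congrFun h 0)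
  · ext i
    simp only [Matrix.mulVec, dotProduct, Matrix.sub_apply, Matrix.one_apply, mul_one,
      Pi.zero_apply, sub_mul, ite_mul, one_mul, zero_mul]
    rw [Finset.sum_sub_distrib, hrow]
    simp

lemma aux_specrad {n : ℕ} (hn : 0 < n) (S : Matrix (Fin n) (Fin n) ℝ)
    (hpos : ∀ i j, 0 ≤ S i j) (hrow : ∀ i, ∑ j, S i j = 1) :
    spectralRadius ℂ (S.map Complex.ofReal) = 1 := by
  haveI : NeZero n := ⟨hn.ne'⟩
  letI : NormedRing (Matrix (Fin n) (Fin n) ℂ) := Matrix.linftyOpNormedRing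
  letI : NormedAlgebra ℂ (Matrix (Fin n) (Fin n) ℂ) := Matrix.linftyOpNormedAlgebra
  haveI : NormOneClass (Matrix (Fin n) (Fin n) ℂ) := Matrix.linfty_opNormOneClass
  have hmem : (1 : ℂ) ∈ spectrum ℂ (S.map Complex.ofReal) := by
    rw [spectrum.mem_iff]
    intro hunit
    rw [show (algebraMap ℂ (Matrix (Fin n) (Fin n) ℂ)) 1 = 1 from map_one _] at hunit
    rw [Matrix.isUnit_iff_isUnit_det] at hunit
    have heq : (1 : Matrix (Fin n) (Fin n) ℂ) - S.map Complex.ofReal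
        = ((1 : Matrix (Fin n) (Fin n) ℝ) - S).map (Complex.ofRealHom : ℝ →+* ℂ) := by
      ext i j
      by_cases h : i = j <;> simp [Matrix.one_apply, h]
    rw [heq, ← RingHom.mapMatrix_apply, ← RingHom.map_det, aux_det_one_sub hn S hrow] at hunit
    simp at hunit
  apply le_antisymm
  · refine le_trans (spectrum.spectralRadius_le_nnnorm (𝕜 := ℂ) _) ?_
    have hnorm : ‖S.map Complex.ofReal‖₊ = 1 := by
      rw [Matrix.linfty_opNNNorm_def]
      have hr : ∀ i : Fin n, ∑ j, ‖(S.map Complex.ofReal) i j‖₊ = 1 := by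
        intro i
        have : ((∑ j, ‖(S.map Complex.ofReal) i j‖₊ : NNReal) : ℝ) = 1 := by
          push_cast
          rw [Finset.sum_congr rfl (fun j _ => show ‖(S.map Complex.ofReal) i j‖ = S i j by
            simp [Matrix.map_apply, abs_of_nonneg (hpos i j)])]
          exact hrow i
        exact_mod_cast this
      rw [Finset.sup_congr rfl (fun i _ => hr i)]
      exact Finset.sup_const ⟨0, Finset.mem_univ 0⟩ 1
    rw [hnorm]
    norm_num
  · have : ((‖(1 : ℂ)‖₊ : ENNReal)) ≤ spectralRadius ℂ (S.map Complex.ofReal) := by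
      unfold spectralRadius
      exact le_iSup₂ (f := fun k (_ : k ∈ spectrum ℂ (S.map Complex.ofReal)) => (‖k‖₊ : ENNReal)) 1 hmem
    simpa using this

/-- At a positive fixed point x, J_T(x) has spectral radius 1, the eigenvalue 1 is
    simple, and the second largest eigenvalue of J_T(x) equals σ₂², the square of
    the second largest singular value of P = diag(1./(Ax))·A·diag(x), i.e. the
    second largest eigenvalue of PᵀP. -/
theorem stmt_18 (n : ℕ) (hn : 0 < n) (A : Matrix (Fin n) (Fin n) ℝ) (hA : ∀ i j, 0 < A i j)
    (x : Fin n → ℝ) (hx : ∀ i, 0 < x i)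
    (hfix : x = (Aᵀ *ᵥ (A *ᵥ x)⁻¹)⁻¹) :
    spectralRadius ℂ
        (((Matrix.diagonal x) ^ 2 * Aᵀ * (Matrix.diagonal ((A *ᵥ x)⁻¹)) ^ 2 * A).map
          Complex.ofReal) = 1 ∧
    ((Matrix.diagonal x) ^ 2 * Aᵀ * (Matrix.diagonal ((A *ᵥ x)⁻¹)) ^ 2 * A).charpoly.rootMultiplicity 1 = 1 ∧
    sSup (spectrum ℝ ((Matrix.diagonal x) ^ 2 * Aᵀ * (Matrix.diagonal ((A *ᵥ x)⁻¹)) ^ 2 * A) \ {1}) =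
      sSup (spectrum ℝ
          ((Matrix.diagonal ((A *ᵥ x)⁻¹) * A * Matrix.diagonal x)ᵀ *
           (Matrix.diagonal ((A *ᵥ x)⁻¹) * A * Matrix.diagonal x)) \ {1}) := by
  haveI : NeZero n := ⟨hn.ne'⟩
  have hAx : ∀ i, 0 < (A *ᵥ x) i := by
    intro i
    simp only [Matrix.mulVec, dotProduct]
    exact Finset.sum_pos (fun j _ => mul_pos (hA i j) (hx j)) ⟨0, Finset.mem_univ 0⟩
  set y : Fin n → ℝ := (A *ᵥ x)⁻¹ with hy_def
  have hy : ∀ i, 0 < y i := fun i => by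
    rw [hy_def, Pi.inv_apply]; exact inv_pos.mpr (hAx i)
  have hATy : ∀ j, 0 < (Aᵀ *ᵥ y) j := by
    intro j
    simp only [Matrix.mulVec, dotProduct, Matrix.transpose_apply]
    exact Finset.sum_pos (fun i _ => mul_pos (hA i j) (hy i)) ⟨0, Finset.mem_univ 0⟩
  have hxj : ∀ j, x j = ((Aᵀ *ᵥ y) j)⁻¹ := by
    intro j
    conv_lhs => rw [hfix]
    rw [Pi.inv_apply]
  set P : Matrix (Fin n) (Fin n) ℝ := Matrix.diagonal y * A * Matrix.diagonal x with hP_def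
  have hPapp : ∀ i j, P i j = y i * A i j * x j := by
    intro i j
    rw [hP_def, Matrix.mul_diagonal, Matrix.diagonal_mul]
  have hPpos : ∀ i j, 0 < P i j := fun i j => by
    rw [hPapp]; exact mul_pos (mul_pos (hy i) (hA i j)) (hx j)
  have hProw : ∀ i, ∑ j, P i j = 1 := by
    intro i
    have h1 : ∑ j, P i j = y i * ∑ j, A i j * x j := by
      rw [Finset.mul_sum]
      exact Finset.sum_congr rfl fun j _ => by rw [hPapp]; ring
    rw [h1, show ∑ j, A i j * x j = (A *ᵥ x) i from rfl,
      show y i = ((A *ᵥ x) i)⁻¹ from rfl]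
    exact inv_mul_cancel₀ (hAx i).ne'
  have hPcol : ∀ j, ∑ i, P i j = 1 := by
    intro j
    have h1 : ∑ i, P i j = (∑ i, A i j * y i) * x j := by
      rw [Finset.sum_mul]
      exact Finset.sum_congr rfl fun i _ => by rw [hPapp]; ring
    rw [h1, show ∑ i, A i j * y i = (Aᵀ *ᵥ y) j from rfl, hxj j]
    exact mul_inv_cancel₀ (hATy j).ne'
  set S : Matrix (Fin n) (Fin n) ℝ := Pᵀ * P with hS_def
  have hSapp : ∀ a b, S a b = ∑ k, P k a * P k b := by
    intro a b
    rw [hS_def, Matrix.mul_apply]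
    exact Finset.sum_congr rfl fun k _ => by rw [Matrix.transpose_apply]
  have hSpos : ∀ a b, 0 < S a b := fun a b => by
    rw [hSapp]
    exact Finset.sum_pos (fun k _ => mul_pos (hPpos k a) (hPpos k b)) ⟨0, Finset.mem_univ 0⟩
  have hSrow : ∀ a, ∑ b, S a b = 1 := by
    intro a
    calc ∑ b, S a b = ∑ b, ∑ k, P k a * P k b := Finset.sum_congr rfl fun b _ => hSapp a b
      _ = ∑ k, ∑ b, P k a * P k b := Finset.sum_comm
      _ = ∑ k, P k a * ∑ b, P k b := Finset.sum_congr rfl fun k _ => (Finset.mul_sum _ _ _).symm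
      _ = ∑ k, P k a := Finset.sum_congr rfl fun k _ => by rw [hProw k, mul_one]
      _ = 1 := hPcol a
  have hSherm : S.IsHermitian := by rw [hS_def]; have := Matrix.isHermitian_conjTranspose_mul_self P; rwa [Matrix.conjTranspose_eq_transpose_of_trivial] at this
  have hcanc : Matrix.diagonal x * Matrix.diagonal x⁻¹ = 1 := by
    rw [Matrix.diagonal_mul_diagonal,
      show (fun i => x i * x⁻¹ i) = fun _ => (1 : ℝ) from
        funext fun i => mul_inv_cancel₀ (hx i).ne']
    exact Matrix.diagonal_one
  have hcanc' : Matrix.diagonal x⁻¹ * Matrix.diagonal x = 1 := by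
    rw [Matrix.diagonal_mul_diagonal,
      show (fun i => x⁻¹ i * x i) = fun _ => (1 : ℝ) from
        funext fun i => inv_mul_cancel₀ (hx i).ne']
    exact Matrix.diagonal_one
  have hJconj : (Matrix.diagonal x) ^ 2 * Aᵀ * (Matrix.diagonal y) ^ 2 * A
      = Matrix.diagonal x * S * Matrix.diagonal x⁻¹ := by
    rw [hS_def, hP_def]
    simp only [Matrix.transpose_mul, Matrix.diagonal_transpose, Matrix.transpose_transpose]
    rw [pow_two, pow_two]
    simp only [Matrix.mul_assoc]
    rw [hcanc]
    simp only [Matrix.mul_one]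
  refine ⟨?_, ?_, ?_⟩
  · have hmapJ : ((Matrix.diagonal x) ^ 2 * Aᵀ * (Matrix.diagonal y) ^ 2 * A).map Complex.ofReal
        = ((Matrix.diagonal x).map Complex.ofReal) * (S.map Complex.ofReal)
          * ((Matrix.diagonal x⁻¹).map Complex.ofReal) := by
      rw [hJconj]
      rw [show (Complex.ofReal : ℝ → ℂ) = ⇑(Complex.ofRealHom : ℝ →+* ℂ) from rfl]
      rw [Matrix.map_mul, Matrix.map_mul]
    have hcC : ((Matrix.diagonal x).map Complex.ofReal) * ((Matrix.diagonal x⁻¹).map Complex.ofReal) = 1 := by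
      rw [show (Complex.ofReal : ℝ → ℂ) = ⇑(Complex.ofRealHom : ℝ →+* ℂ) from rfl,
        ← Matrix.map_mul, hcanc, Matrix.map_one _ (map_zero _) (map_one _)]
    have hcC' : ((Matrix.diagonal x⁻¹).map Complex.ofReal) * ((Matrix.diagonal x).map Complex.ofReal) = 1 := by
      rw [show (Complex.ofReal : ℝ → ℂ) = ⇑(Complex.ofRealHom : ℝ →+* ℂ) from rfl,
        ← Matrix.map_mul, hcanc', Matrix.map_one _ (map_zero _) (map_one _)]
    let uC : (Matrix (Fin n) (Fin n) ℂ)ˣ :=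
      ⟨(Matrix.diagonal x).map Complex.ofReal, (Matrix.diagonal x⁻¹).map Complex.ofReal, hcC, hcC'⟩
    have hspec : spectrum ℂ (((Matrix.diagonal x) ^ 2 * Aᵀ * (Matrix.diagonal y) ^ 2 * A).map Complex.ofReal)
        = spectrum ℂ (S.map Complex.ofReal) := by
      rw [show ((Matrix.diagonal x) ^ 2 * Aᵀ * (Matrix.diagonal y) ^ 2 * A).map Complex.ofReal
        = (uC : Matrix (Fin n) (Fin n) ℂ) * (S.map Complex.ofReal)
          * ((uC⁻¹ : (Matrix (Fin n) (Fin n) ℂ)ˣ) : Matrix (Fin n) (Fin n) ℂ) from hmapJ]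
      exact spectrum.units_conjugate
    have : spectralRadius ℂ (((Matrix.diagonal x) ^ 2 * Aᵀ * (Matrix.diagonal y) ^ 2 * A).map Complex.ofReal)
        = spectralRadius ℂ (S.map Complex.ofReal) := by
      unfold spectralRadius
      rw [hspec]
    rw [this]
    exact aux_specrad hn S (fun i j => (hSpos i j).le) hSrow
  · rw [hJconj, aux_charpoly_conj _ _ _ hcanc hcanc']
    exact aux_mult_one hn S hSherm hSpos hSrow
  · have hspecR : spectrum ℝ ((Matrix.diagonal x) ^ 2 * Aᵀ * (Matrix.diagonal y) ^ 2 * A)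
        = spectrum ℝ S := by
      let uR : (Matrix (Fin n) (Fin n) ℝ)ˣ :=
        ⟨Matrix.diagonal x, Matrix.diagonal x⁻¹, hcanc, hcanc'⟩
      rw [show (Matrix.diagonal x) ^ 2 * Aᵀ * (Matrix.diagonal y) ^ 2 * A
        = (uR : Matrix (Fin n) (Fin n) ℝ) * S
          * ((uR⁻¹ : (Matrix (Fin n) (Fin n) ℝ)ˣ) : Matrix (Fin n) (Fin n) ℝ) from hJconj]
      exact spectrum.units_conjugate
    rw [hspecR, hS_def]
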